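/- Let G be a bipartite graph, M a maximum matching in G, and 𝓔, 𝓞 the sets of even and odd vertices with respect to M. Then in every maximum matching N of G, every vertex of 𝓞 is matched, and its partner in N belongs to 𝓔. -/

import Mathlib

open SimpleGraph

variable {V : Type*}

/-- `M` is a matching in the graph `G`: a set of edges of `G` no two of which
share a vertex. -/
def IsMatchingIn (G : SimpleGraph V) (M : Set (Sym2 V)) : Prop :=
  M ⊆ G.edgeSet ∧ ∀ e ∈ M, ∀ f ∈ M, e ≠ f → ∀ v : V, v ∈ e → v ∉ f

/-- A vertex `v` is matched (covered) by the matching `M`. -/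
def IsMatchedBy (M : Set (Sym2 V)) (v : V) : Prop :=
  ∃ e ∈ M, v ∈ e

/-- The list of edges of a path given as a list of vertices. -/
def pathEdges (p : List V) : List (Sym2 V) :=
  (p.zip p.tail).map fun q => s(q.1, q.2)

/-- `p` is an alternating path from `u` to `v` in `G` with respect to the matching `M`:
its consecutive vertices are adjacent in `G`, it repeats no vertex, and its edges
alternate between edges in `M` and edges not in `M`. -/
def IsAltPath (G : SimpleGraph V) (M : Set (Sym2 V)) (u v : V) (p : List V) : Prop :=
  p.Chain' G.Adj ∧ p.Nodup ∧
    (pathEdges p).Chain' (fun e f => (e ∈ M ↔ f ∉ M)) ∧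
    p.head? = some u ∧ p.getLast? = some v

/-- `v` is even with respect to `M`: there is an even-length alternating path from
an `M`-unmatched vertex to `v`. -/
def EvenVtx (G : SimpleGraph V) (M : Set (Sym2 V)) (v : V) : Prop :=
  ∃ u p, ¬ IsMatchedBy M u ∧ IsAltPath G M u v p ∧ Even (pathEdges p).length

/-- `v` is odd with respect to `M`: there is an odd-length alternating path from
an `M`-unmatched vertex to `v`. -/
def OddVtx (G : SimpleGraph V) (M : Set (Sym2 V)) (v : V) : Prop :=
  ∃ u p, ¬ IsMatchedBy M u ∧ IsAltPath G M u v p ∧ Odd (pathEdges p).length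

/-- `v` is unreachable with respect to `M`: there is no alternating path from any
`M`-unmatched vertex to `v`. -/
def UnreachableVtx (G : SimpleGraph V) (M : Set (Sym2 V)) (v : V) : Prop :=
  ¬ ∃ u p, ¬ IsMatchedBy M u ∧ IsAltPath G M u v p

/-- `M` is a maximum (cardinality) matching in `G`. -/
def IsMaxMatching (G : SimpleGraph V) (M : Set (Sym2 V)) : Prop :=
  IsMatchingIn G M ∧ ∀ N, IsMatchingIn G N → N.ncard ≤ M.ncard

/-- `G` is bipartite with the two sides given by `side`. -/
def IsBipartiteWith (G : SimpleGraph V) (side : V → Bool) : Prop :=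
  ∀ u v, G.Adj u v → side u ≠ side v

-- ===== auxiliary development =====

section PathLemmas

variable {G : SimpleGraph V} {M : Set (Sym2 V)} {u v x y : V} {p : List V}

theorem length_pathEdges (p : List V) : (pathEdges p).length = p.length - 1 := by
  simp [pathEdges, List.length_zip]

theorem lt_of_lt_pe {p : List V} {i : ℕ} (h : i < (pathEdges p).length) : i + 1 < p.length := by
  rw [length_pathEdges] at h; omega

theorem getElem_pathEdges (p : List V) (i : ℕ) (h : i < (pathEdges p).length) :
    (pathEdges p)[i] = s(p[i]'(by have := lt_of_lt_pe h; omega), p[i+1]'(lt_of_lt_pe h)) := by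
  simp only [pathEdges, List.getElem_map, List.getElem_zip]
  rw [List.getElem_tail]

theorem altp_ne_nil (h : IsAltPath G M u v p) : p ≠ [] := by
  intro hnil
  rw [hnil] at h
  exact (by simpa using h.2.2.2.1 : False)

theorem altp_pos (h : IsAltPath G M u v p) : 0 < p.length :=
  List.length_pos_iff.2 (altp_ne_nil h)

theorem altp_head (h : IsAltPath G M u v p) : p[0]'(altp_pos h) = u := by
  have := h.2.2.2.1
  rwa [List.head?_eq_head (altp_ne_nil h), Option.some_inj, List.head_eq_getElem_zero] at this

theorem altp_last (h : IsAltPath G M u v p) :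
    p[p.length - 1]'(by have := altp_pos h; omega) = v := by
  have := h.2.2.2.2
  rwa [List.getLast?_eq_getLast (altp_ne_nil h), Option.some_inj,
    List.getLast_eq_getElem] at this

theorem altp_nodup (h : IsAltPath G M u v p) : p.Nodup := h.2.1

theorem altp_adj (h : IsAltPath G M u v p) {i : ℕ} (hi : i + 1 < p.length) :
    G.Adj (p[i]'(by omega)) (p[i+1]'hi) := by
  have := List.isChain_iff_getElem.1 h.1 i (by omega)
  simpa [List.get_eq_getElem] using this

theorem altp_alt (h : IsAltPath G M u v p) {i : ℕ} (hi : i + 2 < p.length) :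
    (s(p[i]'(by omega), p[i+1]'(by omega)) ∈ M ↔ s(p[i+1]'(by omega), p[i+2]'hi) ∉ M) := by
  have hlen : i + 1 < (pathEdges p).length := by rw [length_pathEdges]; omega
  have := List.isChain_iff_getElem.1 h.2.2.1 i (by rw [length_pathEdges]; omega)
  simp only [List.get_eq_getElem, getElem_pathEdges] at this
  exact this

theorem altp_mk (hne : p ≠ []) (nd : p.Nodup)
    (h0 : p[0]'(List.length_pos_iff.2 hne) = u)
    (hl : p[p.length - 1]'(by have := List.length_pos_iff.2 hne; omega) = v)
    (adj : ∀ i (hi : i + 1 < p.length), G.Adj (p[i]'(by omega)) (p[i+1]'hi))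
    (alt : ∀ i (hi : i + 2 < p.length),
      (s(p[i]'(by omega), p[i+1]'(by omega)) ∈ M ↔ s(p[i+1]'(by omega), p[i+2]'hi) ∉ M)) :
    IsAltPath G M u v p := by
  refine ⟨List.isChain_iff_getElem.2 fun i hi => ?_, nd, List.isChain_iff_getElem.2 fun i hi => ?_, ?_, ?_⟩
  · simpa [List.get_eq_getElem] using adj i (by omega)
  · have hi' : i + 2 < p.length := by rw [length_pathEdges] at hi; omega
    simp only [List.get_eq_getElem, getElem_pathEdges]
    exact alt i hi'
  · rw [List.head?_eq_head hne, Option.some_inj, List.head_eq_getElem_zero]; exact h0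
  · rw [List.getLast?_eq_getLast hne, Option.some_inj, List.getLast_eq_getElem]; exact hl

end PathLemmas

section PathLemmas2

variable {G : SimpleGraph V} {M : Set (Sym2 V)} {side : V → Bool} {u v x y : V} {p : List V}

theorem unmatched_not_mem (hu : ¬ IsMatchedBy M u) {e : Sym2 V} (he : e ∈ M) : u ∉ e :=
  fun hue => hu ⟨e, he, hue⟩

theorem altp_edge_parity (h : IsAltPath G M u v p) (hu : ¬ IsMatchedBy M u) :
    ∀ i (hi : i + 1 < p.length),
      (s(p[i]'(by omega), p[i+1]'hi) ∈ M ↔ Odd i) := by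
  intro i
  induction i with
  | zero =>
    intro hi
    refine ⟨fun hmem => ?_, fun hodd => absurd hodd (by decide)⟩
    exfalso
    have h0 : p[0]'(by omega) = u := altp_head h
    rw [h0] at hmem
    exact unmatched_not_mem hu hmem (by simp)
  | succ n ih =>
    intro hi
    have halt := altp_alt h (i := n) (by omega)
    have ihn := ih (by omega)
    have key : (s(p[n+1]'(by omega), p[n+1+1]'hi) ∈ M) ↔ ¬ Odd n := by
      constructor
      · intro hm hodd; exact (halt.1 (ihn.2 hodd)) hm
      · intro hno; by_contra hf; exact hno (ihn.1 (halt.2 hf))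
    rw [key, Nat.odd_iff, Nat.odd_iff]; omega

theorem altp_side_parity (hbip : IsBipartiteWith G side) (h : IsAltPath G M u v p) :
    ∀ i (hi : i < p.length), (side (p[i]'hi) = side u ↔ Even i) := by
  intro i
  induction i with
  | zero => intro hi; rw [altp_head h]; simp
  | succ n ih =>
    intro hi
    have hne := hbip _ _ (altp_adj h (i := n) hi)
    have ihn := ih (by omega)
    rw [Nat.even_add_one, ← ihn]
    cases hb : side (p[n]'(by omega)) <;> cases hb2 : side (p[n+1]'hi) <;>
      cases hbu : side u <;> simp_all

end PathLemmas2

section PathLemmas3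

variable {G : SimpleGraph V} {M : Set (Sym2 V)} {side : V → Bool} {u v x y : V} {p : List V}

theorem altp_singleton (x : V) : IsAltPath G M x x [x] := by
  refine ⟨List.isChain_singleton _, by simp, by simp [pathEdges]; exact List.IsChain.nil, by simp, by simp⟩

theorem even_of_unmatched (hx : ¬ IsMatchedBy M x) : EvenVtx G M x :=
  ⟨x, [x], hx, altp_singleton x, by simp [pathEdges]⟩

theorem altp_take (h : IsAltPath G M u v p) (t : ℕ) (ht : t < p.length) :
    IsAltPath G M u (p[t]'ht) (p.take (t+1)) := by
  have hlen : (p.take (t+1)).length = t + 1 := by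
    rw [List.length_take]; omega
  refine altp_mk (by intro hq; rw [hq] at hlen; simp at hlen) (h.2.1.sublist (List.take_sublist _ _))
    ?_ ?_ ?_ ?_
  · rw [List.getElem_take]; exact altp_head h
  · simp only [hlen]
    rw [List.getElem_take]
    simp
  · intro i hi
    rw [hlen] at hi
    simp only [List.getElem_take]
    exact altp_adj h (by omega)
  · intro i hi
    rw [hlen] at hi
    simp only [List.getElem_take]
    exact altp_alt h (by omega)

theorem altp_append (hu : ¬ IsMatchedBy M u) (h : IsAltPath G M u x p)
    (hadj : G.Adj x y) (hy : y ∉ p)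
    (hpar : (s(x,y) ∈ M ↔ Odd (p.length - 1))) :
    IsAltPath G M u y (p ++ [y]) := by
  have hpos := altp_pos h
  have hlen : (p ++ [y]).length = p.length + 1 := by simp
  have hget : ∀ i (hi : i < p.length), (p ++ [y])[i]'(by simp; omega) = p[i]'hi := by
    intro i hi; rw [List.getElem_append_left]
  have hgety : (p ++ [y])[p.length]'(by simp) = y := by
    rw [List.getElem_append_right] <;> simp
  refine altp_mk (by simp) ?_ ?_ ?_ ?_ ?_
  · rw [List.nodup_append]
    exact ⟨h.2.1, List.nodup_singleton _, by simpa using fun (a : V) (ha : a ∈ p) (hay : a = y) => hy (hay ▸ ha)⟩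
  · rw [hget 0 hpos]; exact altp_head h
  · simp only [hlen, Nat.add_sub_cancel]; exact hgety
  · intro i hi
    rw [hlen] at hi
    rcases Nat.lt_or_ge (i+1) p.length with hc | hc
    · rw [hget i (by omega), hget (i+1) hc]
      exact altp_adj h hc
    · have hip : i + 1 = p.length := by omega
      have : (p ++ [y])[i+1]'(by simp; omega) = y := by
        simp only [hip]; exact hgety
      rw [hget i (by omega), this]
      have hx' : p[i]'(by omega) = x := by
        have := altp_last h
        simp only [show i = p.length - 1 from by omega]
        exact this
      rw [hx']; exact hadj
  · intro i hi
    rw [hlen] at hi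
    rcases Nat.lt_or_ge (i+2) p.length with hc | hc
    · rw [hget i (by omega), hget (i+1) (by omega), hget (i+2) hc]
      exact altp_alt h hc
    · have hip : i + 2 = p.length := by omega
      have h2 : (p ++ [y])[i+2]'(by simp; omega) = y := by
        simp only [hip]; exact hgety
      rw [hget i (by omega), hget (i+1) (by omega), h2]
      have hx' : p[i+1]'(by omega) = x := by
        have := altp_last h
        simp only [show i + 1 = p.length - 1 from by omega]
        exact this
      have hep := altp_edge_parity h hu i (by omega)
      rw [hx'] at hep ⊢
      rw [hpar, hep, Nat.odd_iff, Nat.odd_iff]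
      omega

theorem pathEdges_append_length : (pathEdges (p ++ [y])).length = p.length := by
  rw [length_pathEdges]; simp

end PathLemmas3

section Extension

variable {G : SimpleGraph V} {M K : Set (Sym2 V)} {side : V → Bool} {u v x y : V} {p q : List V}

theorem matching_eq (hK : IsMatchingIn G K) {e f : Sym2 V} (he : e ∈ K) (hf : f ∈ K)
    {w : V} (hwe : w ∈ e) (hwf : w ∈ f) : e = f := by
  by_contra hne
  exact hK.2 e he f hf hne w hwe hwf

theorem getElem_congr_idx' {i j : ℕ} (hij : i = j) (hi : i < p.length) :
    p[i]'hi = p[j]'(hij ▸ hi) := by subst hij; rfl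

theorem partner_unique (hK : IsMatchingIn G K) {x w1 w2 : V}
    (h1 : s(x,w1) ∈ K) (h2 : s(x,w2) ∈ K) : w1 = w2 :=
  Sym2.congr_right.1 (matching_eq hK h1 h2 (Sym2.mem_iff.2 (Or.inl rfl))
    (Sym2.mem_iff.2 (Or.inl rfl)))

theorem matched_iff {x : V} : IsMatchedBy K x ↔ ∃ w, s(x,w) ∈ K := by
  constructor
  · rintro ⟨e, he, hx⟩
    obtain ⟨w, rfl⟩ := Sym2.mem_iff_exists.1 hx
    exact ⟨w, he⟩
  · rintro ⟨w, hw⟩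
    exact ⟨s(x,w), hw, by simp⟩

theorem nodup_idx {i j : ℕ} (nd : p.Nodup) (hi : i < p.length) (hj : j < p.length)
    (hij : p[i] = p[j]) : i = j := by
  have := List.nodup_iff_injective_getElem.1 nd (a₁ := ⟨i, hi⟩) (a₂ := ⟨j, hj⟩) (by simpa using hij)
  simpa using this

theorem mem_idx {a : V} (ha : a ∈ p) : ∃ (i : ℕ) (h : i < p.length), p[i] = a :=
  List.mem_iff_getElem.1 ha

/-- E1: a vertex joined to an even vertex by a non-matching edge is odd. -/
theorem adj_even_odd (hbip : IsBipartiteWith G side) (hx : EvenVtx G M x)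
    (hadj : G.Adj x y) (hxyM : s(x,y) ∉ M) : OddVtx G M y := by
  obtain ⟨z, q, hz, hq, heq⟩ := hx
  have hqpos := altp_pos hq
  have hLeven : Even (q.length - 1) := by rwa [length_pathEdges] at heq
  have hxlast : q[q.length - 1]'(by omega) = x := altp_last hq
  by_cases hyq : y ∈ q
  · obtain ⟨t, ht, hqt⟩ := mem_idx hyq
    have hsy : side (q[t]'ht) = side z ↔ Even t := altp_side_parity hbip hq t ht
    have hsx : side x = side z := by
      rw [← hxlast]
      exact (altp_side_parity hbip hq _ (by omega)).2 hLeven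
    have hodd : ¬ Even t := by
      intro hev
      have : side y = side z := by rw [← hqt]; exact hsy.2 hev
      exact hbip _ _ hadj (by rw [this, hsx])
    refine ⟨z, q.take (t+1), hz, ?_, ?_⟩
    · have := altp_take hq t ht
      rwa [hqt] at this
    · rw [length_pathEdges, List.length_take, Nat.odd_iff]
      rw [Nat.even_iff] at hodd
      omega
  · refine ⟨z, q ++ [y], hz, ?_, ?_⟩
    · refine altp_append hz hq hadj hyq ?_
      simp only [hxyM, false_iff]
      rw [Nat.odd_iff]; rw [Nat.even_iff] at hLeven; omega
    · rw [pathEdges_append_length, Nat.odd_iff]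
      rw [Nat.even_iff] at hLeven
      omega

/-- E2: the matching-partner of an odd vertex is even. -/
theorem odd_matchEdge_even (hM : IsMatchingIn G M) (hx : OddVtx G M x)
    (hxy : s(x,y) ∈ M) : EvenVtx G M y := by
  obtain ⟨z, q, hz, hq, hodd⟩ := hx
  have hqpos := altp_pos hq
  have hadj : G.Adj x y := (SimpleGraph.mem_edgeSet G).1 (hM.1 hxy)
  have hLodd : Odd (q.length - 1) := by rwa [length_pathEdges] at hodd
  have hL2 : 2 ≤ q.length := by rw [Nat.odd_iff] at hLodd; omega
  have hxlast : q[q.length - 1]'(by omega) = x := altp_last hq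
  by_cases hyq : y ∈ q
  · exfalso
    obtain ⟨t, ht, hqt⟩ := mem_idx hyq
    have hymatched : IsMatchedBy M y := ⟨s(x,y), hxy, by simp⟩
    have ht0 : t ≠ 0 := by
      intro h0
      subst h0
      rw [altp_head hq] at hqt
      exact hz (hqt ▸ hymatched)
    have htne : t ≠ q.length - 1 := by
      intro hteq
      apply hadj.ne
      rw [← hxlast, ← hqt]
      exact getElem_congr_idx' (p := q) hteq.symm (by omega)
    have htlt : t < q.length - 1 := by omega
    rcases Nat.even_or_odd t with hte | hto
    · -- edge (t-1) ∈ M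
      have hep := altp_edge_parity hq hz (t-1) (by omega)
      have hedgeM : s(q[t-1]'(by omega), q[t-1+1]'(by omega)) ∈ M := by
        rw [hep, Nat.odd_iff]; rw [Nat.even_iff] at hte; omega
      have hyin : y ∈ s(q[t-1]'(by omega), q[t-1+1]'(by omega)) := by
        have : t - 1 + 1 = t := by omega
        simp only [this]
        rw [hqt]; simp
      have heq2 := matching_eq hM hedgeM hxy hyin (by simp)
      have hxin : x ∈ s(q[t-1]'(by omega), q[t-1+1]'(by omega)) := by rw [heq2]; simp
      rcases Sym2.mem_iff.1 hxin with hc | hc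
      · rw [← hxlast] at hc
        have := nodup_idx (altp_nodup hq) (by omega) (by omega) hc
        omega
      · have h5 : q[t-1+1]'(by omega) = y := by
          rw [← hqt]; exact getElem_congr_idx' (p := q) (by omega) (by omega)
        exact hadj.ne (hc.trans h5)
    · -- edge t ∈ M
      have hep := altp_edge_parity hq hz t (by omega)
      have hedgeM : s(q[t]'(by omega), q[t+1]'(by omega)) ∈ M := hep.2 hto
      have hyin : y ∈ s(q[t]'(by omega), q[t+1]'(by omega)) := by rw [hqt]; simp
      have heq2 := matching_eq hM hedgeM hxy hyin (by simp)
      have hxin : x ∈ s(q[t]'(by omega), q[t+1]'(by omega)) := by rw [heq2]; simp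
      rcases Sym2.mem_iff.1 hxin with hc | hc
      · rw [hqt] at hc; exact hadj.ne hc
      · rw [← hxlast] at hc
        have := nodup_idx (altp_nodup hq) (by omega) (by omega) hc
        rw [Nat.odd_iff] at hto hLodd
        omega
  · refine ⟨z, q ++ [y], hz, ?_, ?_⟩
    · refine altp_append hz hq hadj hyq ?_
      simp only [hxy, true_iff]
      exact hLodd
    · rw [pathEdges_append_length, Nat.even_iff]
      rw [Nat.odd_iff] at hLodd
      omega

end Extension

section Augment

variable {G : SimpleGraph V} {M K : Set (Sym2 V)} {u v x y : V} {p q : List V}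

theorem card_filter_parity (n : ℕ) :
    (((Finset.range n).filter (fun i => Odd i)).card = n / 2) ∧
    (((Finset.range n).filter (fun i => ¬ Odd i)).card = (n+1) / 2) := by
  induction n with
  | zero => simp
  | succ m ih =>
    rw [Finset.range_add_one, Finset.filter_insert, Finset.filter_insert]
    rcases Nat.even_or_odd m with he | ho
    · rw [if_neg (by rw [Nat.odd_iff]; rw [Nat.even_iff] at he; omega),
        if_pos (by rw [Nat.odd_iff]; rw [Nat.even_iff] at he; omega),
        Finset.card_insert_of_notMem (by simp)]
      rw [Nat.even_iff] at he
      omega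
    · rw [if_pos ho, if_neg (by simpa using ho),
        Finset.card_insert_of_notMem (by simp)]
      rw [Nat.odd_iff] at ho
      omega

theorem pathEdges_mem_iff {e : Sym2 V} :
    e ∈ pathEdges p ↔ ∃ (i : ℕ) (h : i + 1 < p.length),
      e = s(p[i]'(by omega), p[i+1]'h) := by
  rw [List.mem_iff_getElem]
  constructor
  · rintro ⟨i, hi, rfl⟩
    exact ⟨i, lt_of_lt_pe hi, (getElem_pathEdges p i hi)⟩
  · rintro ⟨i, hi, rfl⟩
    refine ⟨i, by rw [length_pathEdges]; omega, getElem_pathEdges p i (by rw [length_pathEdges]; omega)⟩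

/-- distinct edges of a nodup path overlap only if consecutive. -/
theorem path_edge_idx_eq (nd : p.Nodup) {i j : ℕ} (hi : i + 1 < p.length)
    (hj : j + 1 < p.length)
    (hij : s(p[i]'(by omega), p[i+1]'hi) = s(p[j]'(by omega), p[j+1]'hj)) : i = j := by
  rw [Sym2.eq_iff] at hij
  rcases hij with ⟨h1, _⟩ | ⟨h1, h2⟩
  · exact nodup_idx nd (by omega) (by omega) h1
  · have e1 := nodup_idx nd (by omega) (by omega) h1
    have e2 := nodup_idx nd (by omega) (by omega) h2
    omega

/-- If two path edges share a vertex, their indices differ by at most 1. -/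
theorem path_edge_share (nd : p.Nodup) {i j : ℕ} (hi : i + 1 < p.length)
    (hj : j + 1 < p.length) {w : V}
    (hwi : w ∈ s(p[i]'(by omega), p[i+1]'hi)) (hwj : w ∈ s(p[j]'(by omega), p[j+1]'hj)) :
    i = j ∨ i = j + 1 ∨ j = i + 1 := by
  rcases Sym2.mem_iff.1 hwi with h1 | h1 <;> rcases Sym2.mem_iff.1 hwj with h2 | h2
  · have := nodup_idx nd (by omega) (by omega) (h1.symm.trans h2); omega
  · have := nodup_idx nd (by omega) (by omega) (h1.symm.trans h2); omega
  · have := nodup_idx nd (by omega) (by omega) (h1.symm.trans h2); omega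
  · have := nodup_idx nd (by omega) (by omega) (h1.symm.trans h2); omega

end Augment

section Augment2

variable {G : SimpleGraph V} {M K : Set (Sym2 V)} {u v x y : V} {p q : List V}

theorem getD_eq_getElem' (l : List (Sym2 V)) (i : ℕ) (h : i < l.length) (d : Sym2 V) :
    l.getD i d = l[i] := by
  simp [List.getD_eq_getElem?_getD, List.getElem?_eq_getElem h]

theorem path_vertex_edge (hK : IsMatchingIn G K) (hu : ¬ IsMatchedBy K u)
    (hv : ¬ IsMatchedBy K v) (hp : IsAltPath G K u v p) {e : Sym2 V} (he : e ∈ K)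
    {i : ℕ} (hilt : i < p.length) (hmem : p[i]'hilt ∈ e) : e ∈ pathEdges p := by
  have hpos := altp_pos hp
  rcases Nat.eq_or_lt_of_le (Nat.zero_le i) with h0 | h0
  · exfalso
    have : u ∈ e := by rw [← altp_head hp]; simpa [← h0] using hmem
    exact hu ⟨e, he, this⟩
  rcases Nat.eq_or_lt_of_le (Nat.succ_le_of_lt hilt) with hl | hl
  · exfalso
    have hieq : i = p.length - 1 := by omega
    have : v ∈ e := by
      rw [← altp_last hp, ← getElem_congr_idx' (p := p) hieq hilt]
      exact hmem
    exact hv ⟨e, he, this⟩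
  have hiL : i < p.length - 1 := by omega
  rcases Nat.even_or_odd i with hev | hod
  · have hb : i - 1 + 1 < p.length := by omega
    have hedge : s(p[i-1]'(by omega), p[i-1+1]'hb) ∈ K := by
      rw [altp_edge_parity hp hu (i-1) hb, Nat.odd_iff]
      rw [Nat.even_iff] at hev; omega
    have hmem' : p[i]'hilt ∈ s(p[i-1]'(by omega), p[i-1+1]'hb) := by
      rw [getElem_congr_idx' (p := p) (show i - 1 + 1 = i by omega) hb]
      simp
    have := matching_eq hK he hedge hmem hmem'
    rw [this]
    exact pathEdges_mem_iff.2 ⟨i-1, hb, rfl⟩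
  · have hb : i + 1 < p.length := by omega
    have hedge : s(p[i]'(by omega), p[i+1]'hb) ∈ K :=
      (altp_edge_parity hp hu i hb).2 hod
    have hmem' : p[i]'hilt ∈ s(p[i]'(by omega), p[i+1]'hb) := by simp
    have := matching_eq hK he hedge hmem hmem'
    rw [this]
    exact pathEdges_mem_iff.2 ⟨i, hb, rfl⟩

theorem augment [Fintype V] (hK : IsMatchingIn G K) (hu : ¬ IsMatchedBy K u)
    (hv : ¬ IsMatchedBy K v) (hp : IsAltPath G K u v p)
    (hodd : Odd (pathEdges p).length) :
    ∃ K' : Set (Sym2 V), IsMatchingIn G K' ∧ K.ncard < K'.ncard := by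
  classical
  have hpos := altp_pos hp
  have hL : (pathEdges p).length = p.length - 1 := length_pathEdges p
  have hLodd : Odd (p.length - 1) := by rwa [hL] at hodd
  set f : ℕ → Sym2 V := fun i => (pathEdges p).getD i s(u,u) with hfdef
  have hfeq : ∀ i (h : i + 1 < p.length), f i = s(p[i]'(by omega), p[i+1]'h) := by
    intro i h
    rw [hfdef]
    simp only
    rw [getD_eq_getElem' _ _ (by rw [hL]; omega), getElem_pathEdges]
  have hPEnd : (pathEdges p).Nodup := by
    rw [List.nodup_iff_injective_getElem]
    rintro ⟨i, hi⟩ ⟨j, hj⟩ hij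
    simp only [getElem_pathEdges] at hij
    exact Fin.ext (path_edge_idx_eq (altp_nodup hp) (lt_of_lt_pe hi) (lt_of_lt_pe hj) hij)
  have finj : ∀ i ∈ Finset.range (p.length - 1), ∀ j ∈ Finset.range (p.length - 1),
      f i = f j → i = j := by
    intro i hi j hj hij
    rw [Finset.mem_range] at hi hj
    rw [hfeq i (by omega), hfeq j (by omega)] at hij
    exact path_edge_idx_eq (altp_nodup hp) (by omega) (by omega) hij
  set Todd := (Finset.range (p.length - 1)).filter (fun i => Odd i) with hTodd
  set Tev := (Finset.range (p.length - 1)).filter (fun i => ¬ Odd i) with hTev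
  set SM : Set (Sym2 V) := ↑(Todd.image f) with hSMdef
  set SO : Set (Sym2 V) := ↑(Tev.image f) with hSOdef
  have hSM : ∀ e, e ∈ SM ↔ (e ∈ pathEdges p ∧ e ∈ K) := by
    intro e
    constructor
    · intro he
      rw [hSMdef] at he
      obtain ⟨i, hi, rfl⟩ := Finset.mem_image.1 (by exact_mod_cast he)
      rw [hTodd, Finset.mem_filter, Finset.mem_range] at hi
      rw [hfeq i (by omega)]
      exact ⟨pathEdges_mem_iff.2 ⟨i, by omega, rfl⟩,
        (altp_edge_parity hp hu i (by omega)).2 hi.2⟩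
    · rintro ⟨hpe, heK⟩
      obtain ⟨i, hi, rfl⟩ := pathEdges_mem_iff.1 hpe
      have : Odd i := (altp_edge_parity hp hu i hi).1 heK
      rw [hSMdef]
      refine Finset.mem_coe.2 (Finset.mem_image.2 ⟨i, ?_, (hfeq i hi)⟩)
      rw [hTodd, Finset.mem_filter, Finset.mem_range]
      exact ⟨by omega, this⟩
  have hSO : ∀ e, e ∈ SO ↔ (e ∈ pathEdges p ∧ e ∉ K) := by
    intro e
    constructor
    · intro he
      rw [hSOdef] at he
      obtain ⟨i, hi, rfl⟩ := Finset.mem_image.1 (by exact_mod_cast he)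
      rw [hTev, Finset.mem_filter, Finset.mem_range] at hi
      rw [hfeq i (by omega)]
      refine ⟨pathEdges_mem_iff.2 ⟨i, by omega, rfl⟩, fun hc => ?_⟩
      exact hi.2 ((altp_edge_parity hp hu i (by omega)).1 hc)
    · rintro ⟨hpe, heK⟩
      obtain ⟨i, hi, rfl⟩ := pathEdges_mem_iff.1 hpe
      have : ¬ Odd i := fun hc => heK ((altp_edge_parity hp hu i hi).2 hc)
      rw [hSOdef]
      refine Finset.mem_coe.2 (Finset.mem_image.2 ⟨i, ?_, (hfeq i hi)⟩)
      rw [hTev, Finset.mem_filter, Finset.mem_range]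
      exact ⟨by omega, this⟩
  -- SO-edge membership decomposition helper
  have hSOidx : ∀ e ∈ SO, ∃ (i : ℕ) (h : i + 1 < p.length),
      e = s(p[i]'(by omega), p[i+1]'h) ∧ ¬ Odd i := by
    intro e he
    obtain ⟨hpe, henK⟩ := (hSO e).1 he
    obtain ⟨i, hi, rfl⟩ := pathEdges_mem_iff.1 hpe
    exact ⟨i, hi, rfl, fun hc => henK ((altp_edge_parity hp hu i hi).2 hc)⟩
  refine ⟨(K \ SM) ∪ SO, ⟨?_, ?_⟩, ?_⟩
  · -- subset of edgeSet
    rintro e (he | he)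
    · exact hK.1 he.1
    · obtain ⟨i, hi, rfl, -⟩ := hSOidx e he
      exact (SimpleGraph.mem_edgeSet G).2 (altp_adj hp hi)
  · -- pairwise disjoint
    rintro e (he | he) g (hg | hg) hne w hwe hwg
    · exact hK.2 e he.1 g hg.1 hne w hwe hwg
    · obtain ⟨j, hj, rfl, -⟩ := hSOidx g hg
      rcases Sym2.mem_iff.1 hwg with h1 | h1
      · exact he.2 ((hSM e).2 ⟨path_vertex_edge hK hu hv hp he.1 (by omega) (h1 ▸ hwe), he.1⟩)
      · exact he.2 ((hSM e).2 ⟨path_vertex_edge hK hu hv hp he.1 (by omega) (h1 ▸ hwe), he.1⟩)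
    · obtain ⟨j, hj, rfl, -⟩ := hSOidx e he
      rcases Sym2.mem_iff.1 hwe with h1 | h1
      · exact hg.2 ((hSM g).2 ⟨path_vertex_edge hK hu hv hp hg.1 (by omega) (h1 ▸ hwg), hg.1⟩)
      · exact hg.2 ((hSM g).2 ⟨path_vertex_edge hK hu hv hp hg.1 (by omega) (h1 ▸ hwg), hg.1⟩)
    · obtain ⟨i, hi, rfl, hie⟩ := hSOidx e he
      obtain ⟨j, hj, rfl, hje⟩ := hSOidx g hg
      have := path_edge_share (altp_nodup hp) hi hj hwe hwg
      rw [Nat.odd_iff] at hie hje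
      have : i = j := by omega
      subst this
      exact hne rfl
  · -- cardinality
    have hSMsub : SM ⊆ K := fun e he => ((hSM e).1 he).2
    have hdisj : Disjoint (K \ SM) SO := by
      rw [Set.disjoint_left]
      rintro e ⟨heK, -⟩ heSO
      exact ((hSO e).1 heSO).2 heK
    have hcardSM : SM.ncard = (p.length - 1) / 2 := by
      rw [hSMdef, Set.ncard_coe_finset, Finset.card_image_of_injOn
        (fun i hi j hj => finj i (Finset.mem_of_mem_filter i hi) j (Finset.mem_of_mem_filter j hj))]
      exact (card_filter_parity _).1
    have hcardSO : SO.ncard = (p.length - 1) / 2 + 1 := by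
      rw [hSOdef, Set.ncard_coe_finset, Finset.card_image_of_injOn
        (fun i hi j hj => finj i (Finset.mem_of_mem_filter i hi) j (Finset.mem_of_mem_filter j hj))]
      rw [(card_filter_parity _).2]
      rw [Nat.odd_iff] at hLodd
      omega
    have hKfin : K.Finite := Set.toFinite K
    have hcsub : SM.ncard ≤ K.ncard := Set.ncard_le_ncard hSMsub hKfin
    rw [Set.ncard_union_eq hdisj (Set.toFinite _) (Set.toFinite _),
      Set.ncard_diff hSMsub (Set.toFinite _), hcardSM, hcardSO]
    omega

theorem odd_matched [Fintype V] (hmax : IsMaxMatching G M) (hx : OddVtx G M x) :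
    IsMatchedBy M x := by
  by_contra hun
  obtain ⟨z, q, hz, hq, hodd⟩ := hx
  obtain ⟨K', hK', hlt⟩ := augment hmax.1 hz hun hq hodd
  have := hmax.2 K' hK'
  omega

end Augment2

section Exclusive

variable {G : SimpleGraph V} {M : Set (Sym2 V)} {side : V → Bool} {x z : V} {q : List V}

theorem not_even_and_odd [Fintype V] (hmax : IsMaxMatching G M)
    (hbip : IsBipartiteWith G side) (hx : EvenVtx G M x) (hox : OddVtx G M x) : False := by
  obtain ⟨z, q, hz, hq, hev⟩ := hx
  have main : ∀ n x z (q : List V), ¬ IsMatchedBy M z → IsAltPath G M z x q →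
      (pathEdges q).length = n → Even n → OddVtx G M x → False := by
    intro n
    induction n using Nat.strong_induction_on with
    | _ n ih =>
      intro x z q hz hq hlen hevn hox
      have hpos := altp_pos hq
      have hLpe := length_pathEdges q
      rcases Nat.eq_zero_or_pos n with h0 | hnpos
      · subst h0
        have hql : q.length = 1 := by omega
        have hxz : x = z := by
          have h3 : q[q.length - 1]'(by omega) = q[0]'(by omega) :=
            getElem_congr_idx' (p := q) (by omega) (by omega)
          exact ((altp_last hq).symm.trans h3).trans (altp_head hq)
        exact hz (hxz ▸ odd_matched hmax hox)
      · have hn2 : n ≥ 2 := by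
          rcases hevn with ⟨m, hm⟩; omega
        have hqlen : q.length = n + 1 := by omega
        have hnodd : Odd (n - 1) := by
          rw [Nat.even_iff] at hevn; rw [Nat.odd_iff]; omega
        -- last edge (index n-1) is in M
        have hlastM : s(q[n-1]'(by omega), q[n-1+1]'(by omega)) ∈ M := by
          rw [altp_edge_parity hq hz (n-1) (by omega)]
          exact hnodd
        have hqx : q[n-1+1]'(by omega) = x := by
          rw [← altp_last hq]
          exact getElem_congr_idx' (p := q) (by omega) (by omega)
        -- E2 : q[n-1] is even
        have hprevEven : EvenVtx G M (q[n-1]'(by omega)) := by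
          refine odd_matchEdge_even hmax.1 hox ?_
          rw [← hqx]
          rw [Sym2.eq_swap] at hlastM
          exact hlastM
        -- E1 : q[n-2] is odd
        have hprevadj : G.Adj (q[n-2]'(by omega)) (q[n-2+1]'(by omega)) :=
          altp_adj hq (by omega)
        have hprevnotM : s(q[n-2]'(by omega), q[n-2+1]'(by omega)) ∉ M := by
          rw [altp_edge_parity hq hz (n-2) (by omega), Nat.odd_iff]
          rw [Nat.odd_iff] at hnodd
          omega
        have h21 : q[n-2+1]'(by omega) = q[n-1]'(by omega) :=
          getElem_congr_idx' (p := q) (by omega) (by omega)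
        have hprevOdd : OddVtx G M (q[n-2]'(by omega)) := by
          refine adj_even_odd hbip hprevEven ?_ ?_
          · rw [← h21]; exact hprevadj.symm
          · rw [Sym2.eq_swap, h21] at hprevnotM
            exact hprevnotM
        -- apply IH to the prefix ending at q[n-2]
        refine ih (n-2) (by omega) (q[n-2]'(by omega)) z (q.take (n-2+1)) hz
          (altp_take hq (n-2) (by omega)) ?_ ?_ hprevOdd
        · rw [length_pathEdges, List.length_take]; omega
        · rw [Nat.even_iff]; rw [Nat.odd_iff] at hnodd; omega
  exact main _ x z q hz hq rfl hev hox

end Exclusive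

section F2

variable {G : SimpleGraph V} {M : Set (Sym2 V)} {x y z : V} {q : List V}

theorem even_matchEdge_odd (hM : IsMatchingIn G M) (hx : EvenVtx G M x)
    (hxy : s(x,y) ∈ M) : OddVtx G M y := by
  obtain ⟨z, q, hz, hq, hev⟩ := hx
  have hpos := altp_pos hq
  have hLpe := length_pathEdges q
  set n := (pathEdges q).length with hn
  rcases Nat.eq_zero_or_pos n with h0 | hnpos
  · exfalso
    have hql : q.length = 1 := by omega
    have hxz : x = z := by
      have h3 : q[q.length - 1]'(by omega) = q[0]'(by omega) :=
        getElem_congr_idx' (p := q) (by omega) (by omega)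
      exact ((altp_last hq).symm.trans h3).trans (altp_head hq)
    exact hz ⟨s(x,y), hxy, by rw [← hxz]; simp⟩
  · have hn2 : n ≥ 2 := by rcases hev with ⟨m, hm⟩; omega
    have hqlen : q.length = n + 1 := by omega
    have hnodd : Odd (n-1) := by rw [Nat.even_iff] at hev; rw [Nat.odd_iff]; omega
    have hlastM : s(q[n-1]'(by omega), q[n-1+1]'(by omega)) ∈ M := by
      rw [altp_edge_parity hq hz (n-1) (by omega)]
      exact hnodd
    have hqx : q[n-1+1]'(by omega) = x := by
      rw [← altp_last hq]
      exact getElem_congr_idx' (p := q) (by omega) (by omega)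
    rw [hqx, Sym2.eq_swap] at hlastM
    have hyq : y = q[n-1]'(by omega) := partner_unique hM hxy hlastM
    refine ⟨z, q.take (n-1+1), hz, ?_, ?_⟩
    · have := altp_take hq (n-1) (by omega)
      rwa [← hyq] at this
    · rw [length_pathEdges, List.length_take, Nat.odd_iff]
      rw [Nat.odd_iff] at hnodd
      omega

end F2

section Partner

variable {G : SimpleGraph V} {K : Set (Sym2 V)} {x y : V}

open Classical in
noncomputable def partnerOf (K : Set (Sym2 V)) (x : V) : V :=
  if h : ∃ w, s(x,w) ∈ K then h.choose else x

theorem partner_mem (h : IsMatchedBy K x) : s(x, partnerOf K x) ∈ K := by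
  have h' := matched_iff.1 h
  rw [partnerOf]
  rw [dif_pos h']
  exact h'.choose_spec

theorem partner_eq (hK : IsMatchingIn G K) (hxy : s(x,y) ∈ K) : partnerOf K x = y :=
  partner_unique hK (partner_mem ⟨s(x,y), hxy, by simp⟩) hxy

theorem partner_invol (hK : IsMatchingIn G K) (h : IsMatchedBy K x) :
    partnerOf K (partnerOf K x) = x := by
  have := partner_mem h
  rw [Sym2.eq_swap] at this
  exact partner_eq hK this

theorem matching_mono {S : Set (Sym2 V)} (hK : IsMatchingIn G K) (hS : S ⊆ K) :
    IsMatchingIn G S :=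
  ⟨hS.trans hK.1, fun e he f hf hne w hwe hwf => hK.2 e (hS he) f (hS hf) hne w hwe hwf⟩

theorem ncard_mem_sym2 {e : Sym2 V} (he : ¬ e.IsDiag) : {v | v ∈ e}.ncard = 2 := by
  induction e with
  | _ a b =>
    have hab : a ≠ b := by simpa using he
    have : {v | v ∈ s(a,b)} = {a, b} := by ext w; simp [Sym2.mem_iff]
    rw [this, Set.ncard_pair hab]

theorem ncard_matched_eq [Fintype V] (hK : IsMatchingIn G K) :
    {v | IsMatchedBy K v}.ncard = 2 * K.ncard := by
  have main : ∀ (S : Set (Sym2 V)), S.Finite → IsMatchingIn G S →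
      {v | IsMatchedBy S v}.ncard = 2 * S.ncard := by
    intro S hfin
    refine Set.Finite.induction_on
      (motive := fun S _ => IsMatchingIn G S → {v | IsMatchedBy S v}.ncard = 2 * S.ncard) S
      hfin (by intro _; simp [IsMatchedBy]) ?_
    rintro e S henS hSfin ih hins
    have hS : IsMatchingIn G S := matching_mono hins (Set.subset_insert _ _)
    have hsplit : {v | IsMatchedBy (insert e S) v} = {v | v ∈ e} ∪ {v | IsMatchedBy S v} := by
      ext w
      simp only [Set.mem_setOf_eq, Set.mem_union, IsMatchedBy, Set.mem_insert_iff]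
      constructor
      · rintro ⟨f, (rfl | hf), hwf⟩
        · exact Or.inl hwf
        · exact Or.inr ⟨f, hf, hwf⟩
      · rintro (hw | ⟨f, hf, hwf⟩)
        · exact ⟨e, Or.inl rfl, hw⟩
        · exact ⟨f, Or.inr hf, hwf⟩
    have hdisj : Disjoint {v | v ∈ e} {v | IsMatchedBy S v} := by
      rw [Set.disjoint_left]
      rintro w hwe ⟨f, hf, hwf⟩
      have hef : e ≠ f := fun h => henS (h ▸ hf)
      exact hins.2 e (Or.inl rfl) f (Or.inr hf) hef w hwe hwf
    have hediag : ¬ e.IsDiag := by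
      have : e ∈ G.edgeSet := hins.1 (Or.inl rfl)
      exact G.not_isDiag_of_mem_edgeSet this
    rw [hsplit, Set.ncard_union_eq hdisj (Set.toFinite _) (Set.toFinite _),
      ncard_mem_sym2 hediag, ih hS, Set.ncard_insert_of_notMem henS hSfin]
    ring
  exact main K (Set.toFinite K) hK

end Partner


/-- In every maximum matching `N`, every odd vertex (odd with respect
to a fixed maximum matching `M`) is matched, and its partner in `N` is even. -/
theorem odd_vertex_matched_to_even [Fintype V]
    (G : SimpleGraph V) (side : V → Bool) (hbip : IsBipartiteWith G side)
    (M : Set (Sym2 V)) (hM : IsMaxMatching G M)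
    (N : Set (Sym2 V)) (hN : IsMaxMatching G N)
    (v : V) (hv : OddVtx G M v) :
    IsMatchedBy N v ∧ ∀ w, s(v, w) ∈ N → EvenVtx G M w := by
  classical
  set OS : Set V := {x | OddVtx G M x} with hOSdef
  set ES : Set V := {x | EvenVtx G M x} with hESdef
  set US : Set V := {x | x ∉ OS ∧ x ∉ ES} with hUSdef
  have hdisjOE : ∀ x, x ∈ OS → x ∈ ES → False := fun x ho he =>
    not_even_and_odd hM hbip he ho
  have hadjE : ∀ x y, x ∈ ES → G.Adj x y → y ∈ OS := by
    intro x y hx hadj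
    by_cases hm : s(x,y) ∈ M
    · exact even_matchEdge_odd hM.1 hx hm
    · exact adj_even_odd hbip hx hadj hm
  have hOmatched : ∀ x ∈ OS, IsMatchedBy M x := fun x hx => odd_matched hM hx
  have hUmatchedM : ∀ x ∈ US, IsMatchedBy M x := by
    intro x hx
    by_contra hun
    exact hx.2 (even_of_unmatched hun)
  have hpmO : ∀ x ∈ OS, partnerOf M x ∈ ES := fun x hx =>
    odd_matchEdge_even hM.1 hx (partner_mem (hOmatched x hx))
  have hpmE : ∀ x, x ∈ ES → IsMatchedBy M x → partnerOf M x ∈ OS := fun x hx hm =>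
    even_matchEdge_odd hM.1 hx (partner_mem hm)
  -- partition counting
  have hpart : ∀ A : Set V, A.ncard = (A ∩ OS).ncard + (A ∩ ES).ncard + (A ∩ US).ncard := by
    intro A
    have hcover : A = (A ∩ OS) ∪ ((A ∩ ES) ∪ (A ∩ US)) := by
      ext x
      constructor
      · intro hx
        by_cases h1 : x ∈ OS
        · exact Or.inl ⟨hx, h1⟩
        by_cases h2 : x ∈ ES
        · exact Or.inr (Or.inl ⟨hx, h2⟩)
        · exact Or.inr (Or.inr ⟨hx, ⟨h1, h2⟩⟩)
      · rintro (⟨h, -⟩ | ⟨h, -⟩ | ⟨h, -⟩) <;> exact h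
    have hd1 : Disjoint (A ∩ ES) (A ∩ US) := by
      rw [Set.disjoint_left]
      rintro x ⟨-, hxE⟩ ⟨-, hxU⟩
      exact hxU.2 hxE
    have hd2 : Disjoint (A ∩ OS) ((A ∩ ES) ∪ (A ∩ US)) := by
      rw [Set.disjoint_left]
      rintro x ⟨-, hxO⟩ (⟨-, hxE⟩ | ⟨-, hxU⟩)
      · exact hdisjOE x hxO hxE
      · exact hxU.1 hxO
    calc A.ncard = ((A ∩ OS) ∪ ((A ∩ ES) ∪ (A ∩ US))).ncard := by rw [← hcover]
      _ = (A ∩ OS).ncard + ((A ∩ ES) ∪ (A ∩ US)).ncard :=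
          Set.ncard_union_eq hd2 (Set.toFinite _) (Set.toFinite _)
      _ = (A ∩ OS).ncard + ((A ∩ ES).ncard + (A ∩ US).ncard) := by
          rw [Set.ncard_union_eq hd1 (Set.toFinite _) (Set.toFinite _)]
      _ = _ := by ring
  set mM : Set V := {x | IsMatchedBy M x} with hmMdef
  set mN : Set V := {x | IsMatchedBy N x} with hmNdef
  have h2M : mM.ncard = 2 * M.ncard := ncard_matched_eq hM.1
  have h2N : mN.ncard = 2 * N.ncard := ncard_matched_eq hN.1
  have hMO : mM ∩ OS = OS :=
    Set.Subset.antisymm Set.inter_subset_right (fun x hx => ⟨hOmatched x hx, hx⟩)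
  have hMU : mM ∩ US = US :=
    Set.Subset.antisymm Set.inter_subset_right (fun x hx => ⟨hUmatchedM x hx, hx⟩)
  have himgM : partnerOf M '' OS = mM ∩ ES := by
    apply Set.Subset.antisymm
    · rintro y ⟨x, hx, rfl⟩
      have hmem : s(x, partnerOf M x) ∈ M := partner_mem (hOmatched x hx)
      exact ⟨⟨s(x, partnerOf M x), hmem, by simp⟩, hpmO x hx⟩
    · rintro y ⟨hym, hyE⟩
      exact ⟨partnerOf M y, hpmE y hyE hym, partner_invol hM.1 hym⟩
  have hinjM : Set.InjOn (partnerOf M) OS := by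
    intro a ha b hb hab
    have h1 : a = partnerOf M (partnerOf M a) := (partner_invol hM.1 (hOmatched a ha)).symm
    rw [h1, hab, partner_invol hM.1 (hOmatched b hb)]
  have hME : (mM ∩ ES).ncard = OS.ncard := by
    rw [← himgM, Set.ncard_image_of_injOn hinjM]
  have hMcount : 2 * M.ncard = OS.ncard + OS.ncard + US.ncard := by
    rw [← h2M, hpart mM, hMO, hMU, hME]
  -- N side
  have hNpartnerE : ∀ y ∈ mN ∩ ES, partnerOf N y ∈ mN ∩ OS := by
    rintro y ⟨hym, hyE⟩
    have hmemN : s(y, partnerOf N y) ∈ N := partner_mem hym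
    have hadj : G.Adj y (partnerOf N y) := (SimpleGraph.mem_edgeSet G).1 (hN.1.1 hmemN)
    refine ⟨⟨s(y, partnerOf N y), hmemN, by simp⟩, hadjE y _ hyE hadj⟩
  have hinjN : Set.InjOn (partnerOf N) (mN ∩ ES) := by
    rintro a ⟨ham, -⟩ b ⟨hbm, -⟩ hab
    have h1 : a = partnerOf N (partnerOf N a) := (partner_invol hN.1 ham).symm
    rw [h1, hab, partner_invol hN.1 hbm]
  have himgNsub : partnerOf N '' (mN ∩ ES) ⊆ mN ∩ OS := by
    rintro y ⟨x, hx, rfl⟩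
    exact hNpartnerE x hx
  have hble : (mN ∩ ES).ncard ≤ (mN ∩ OS).ncard := by
    rw [← Set.ncard_image_of_injOn hinjN]
    exact Set.ncard_le_ncard himgNsub (Set.toFinite _)
  have hale : (mN ∩ OS).ncard ≤ OS.ncard :=
    Set.ncard_le_ncard Set.inter_subset_right (Set.toFinite _)
  have hcle : (mN ∩ US).ncard ≤ US.ncard :=
    Set.ncard_le_ncard Set.inter_subset_right (Set.toFinite _)
  have hsum : (mN ∩ OS).ncard + (mN ∩ ES).ncard + (mN ∩ US).ncard = 2 * N.ncard := by
    rw [← hpart mN, h2N]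
  have hNM : M.ncard ≤ N.ncard := hN.2 M hM.1
  have haeq : (mN ∩ OS).ncard = OS.ncard := by omega
  have hbeq : (mN ∩ ES).ncard = (mN ∩ OS).ncard := by omega
  have hOSeq : mN ∩ OS = OS :=
    Set.eq_of_subset_of_ncard_le Set.inter_subset_right haeq.ge (Set.toFinite _)
  have hvN : IsMatchedBy N v := by
    have : v ∈ mN ∩ OS := by rw [hOSeq]; exact hv
    exact this.1
  refine ⟨hvN, ?_⟩
  intro w hw
  have himgN : partnerOf N '' (mN ∩ ES) = mN ∩ OS := by
    refine Set.eq_of_subset_of_ncard_le himgNsub ?_ (Set.toFinite _)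
    rw [Set.ncard_image_of_injOn hinjN]
    omega
  have hvmem : v ∈ partnerOf N '' (mN ∩ ES) := by
    rw [himgN]
    exact ⟨hvN, hv⟩
  obtain ⟨z, hz, hzv⟩ := hvmem
  have h1 : partnerOf N v = z := by rw [← hzv, partner_invol hN.1 hz.1]
  have h2 : partnerOf N v = w := partner_eq hN.1 hw
  have : w = z := h2.symm.trans h1
  rw [this]
  exact hz.2
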